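/- There exists a satisfiable TeamLTL(~) formula all of whose models are uncountable: for AP = {1, 2, #}, there is a TeamLTL(~) formula φ and an uncountable team satisfying φ, such that every team L with L ⊨ φ is uncountable. -/

import Mathlib

/-- A trace over the set `AP` of atomic propositions. -/
abbrev Trace (AP : Type) := ℕ → Set AP

/-- A team: a set of traces. -/
abbrev Team (AP : Type) := Set (Trace AP)

/-- The suffix `w≥i` of a trace. -/
def Trace.shift {AP : Type} (w : Trace AP) (i : ℕ) : Trace AP := fun j => w (i + j)

/-- The suffix team `L≥i`. -/
def Team.shift {AP : Type} (L : Team AP) (i : ℕ) : Team AP := (fun w => Trace.shift w i) '' L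


/-- TeamLTL(~) formulas over `AP`: TeamLTL extended with Boolean negation `~`. -/
inductive TeamFormN (AP : Type) : Type where
  | atom (p : AP)
  | natom (p : AP)
  | or (φ ψ : TeamFormN AP)
  | and (φ ψ : TeamFormN AP)
  | bneg (φ : TeamFormN AP)
  | next (φ : TeamFormN AP)
  | untl (φ ψ : TeamFormN AP)
  | rel (φ ψ : TeamFormN AP)

/-- Team satisfaction for TeamLTL(~), with split disjunction. -/
def TeamFormN.sat {AP : Type} : TeamFormN AP → Team AP → Prop
  | .atom p, L => ∀ w ∈ L, p ∈ w 0
  | .natom p, L => ∀ w ∈ L, p ∉ w 0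
  | .or φ ψ, L => ∃ L1 L2, L = L1 ∪ L2 ∧ φ.sat L1 ∧ ψ.sat L2
  | .and φ ψ, L => φ.sat L ∧ ψ.sat L
  | .bneg φ, L => ¬ φ.sat L
  | .next φ, L => φ.sat (L.shift 1)
  | .untl φ ψ, L => ∃ i, ψ.sat (L.shift i) ∧ ∀ k < i, φ.sat (L.shift k)
  | .rel φ ψ, L => ∀ i, ψ.sat (L.shift i) ∨ ∃ k < i, φ.sat (L.shift k)

/-- The set `AP = {1, 2, #}` of atomic propositions. -/
inductive AP3 : Type where
  | one
  | two
  | hash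
deriving DecidableEq

instance : Fintype AP3 where
  elems := {AP3.one, AP3.two, AP3.hash}
  complete := by intro x; cases x <;> simp

namespace UncAux

abbrev F := TeamFormN AP3

def a1 : F := .atom .one
def n1 : F := .natom .one
def a2 : F := .atom .two
def n2 : F := .natom .two
def ah : F := .atom .hash
def nh : F := .natom .hash

def TT : F := .or a1 n1
def NEf : F := .bneg (.and a1 n1)
def FF : F := .bneg TT
def Gf (φ : F) : F := .rel FF φ
def Ef (φ : F) : F := .or (.and φ NEf) TT
def impf (φ ψ : F) : F := .bneg (.and φ (.bneg ψ))

def once : F := .or nh (.next (Gf nh))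
def Φ1 : F := .or (Gf (.and a2 (.and n1 once))) (Gf (.and n2 nh))
def Φ2 : F := Gf (Ef (.and a2 ah))
def cond1 : F := impf (Ef (.and n2 a1)) (.or a2 a1)
def cond2 : F := impf (Ef (.and a2 ah)) (Ef (.and n2 a1))
def cond3 : F := impf (Ef (.and n2 a1)) (Ef (.and a2 ah))
def matchf : F := Gf (.and cond1 (.and cond2 cond3))
def bet : F := .or (.and (Ef n2) matchf) (Gf n2)
def Φ3 : F := .bneg (.or (Gf a2) (.bneg bet))
def Φ : F := .and Φ1 (.and Φ2 Φ3)

@[simp] lemma shift_apply (w : Trace AP3) (i j : ℕ) : w.shift i j = w (i + j) := rfl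

lemma mem_shift {L : Team AP3} {i : ℕ} {u : Trace AP3} :
    u ∈ L.shift i ↔ ∃ w ∈ L, w.shift i = u := Set.mem_image _ _ _

lemma shift_mem_shift {L : Team AP3} {w : Trace AP3} (hw : w ∈ L) (i : ℕ) :
    w.shift i ∈ L.shift i := ⟨w, hw, rfl⟩

lemma sat_tt (L : Team AP3) : TT.sat L := by
  refine ⟨{w ∈ L | AP3.one ∈ w 0}, {w ∈ L | AP3.one ∉ w 0}, ?_, ?_, ?_⟩
  · ext w; by_cases h : AP3.one ∈ w 0 <;> simp [h]
  · exact fun w hw => hw.2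
  · exact fun w hw => hw.2

lemma sat_NE {L : Team AP3} : NEf.sat L ↔ L.Nonempty := by
  constructor
  · intro h
    by_contra hne
    rw [Set.not_nonempty_iff_eq_empty] at hne
    subst hne
    exact h ⟨fun w hw => absurd hw (Set.notMem_empty w),
             fun w hw => absurd hw (Set.notMem_empty w)⟩
  · rintro ⟨w, hw⟩ ⟨h1, h2⟩
    exact h2 w hw (h1 w hw)

lemma sat_G {φ : F} {L : Team AP3} : (Gf φ).sat L ↔ ∀ i, φ.sat (L.shift i) := by
  constructor
  · intro h i
    rcases h i with h | ⟨k, _, hk⟩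
    · exact h
    · exact absurd (sat_tt _) hk
  · intro h i; exact Or.inl (h i)

lemma sat_E {φ : F} {L : Team AP3} :
    (Ef φ).sat L ↔ ∃ T, T ⊆ L ∧ T.Nonempty ∧ φ.sat T := by
  constructor
  · rintro ⟨L1, L2, hU, ⟨hφ, hNE⟩, -⟩
    exact ⟨L1, hU ▸ Set.subset_union_left, sat_NE.mp hNE, hφ⟩
  · rintro ⟨T, hT, hne, hφ⟩
    exact ⟨T, L, (Set.union_eq_self_of_subset_left hT).symm, ⟨hφ, sat_NE.mpr hne⟩, sat_tt L⟩

lemma sat_imp {φ ψ : F} {L : Team AP3} :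
    (impf φ ψ).sat L ↔ (φ.sat L → ψ.sat L) := by
  constructor
  · intro h hφ
    by_contra hψ
    exact h ⟨hφ, hψ⟩
  · rintro h ⟨hφ, hψ⟩
    exact hψ (h hφ)

/-- classification of traces in a team satisfying Φ1 -/
lemma classify {L : Team AP3} (h : Φ1.sat L) :
    ∀ w ∈ L,
      ((∀ i, AP3.two ∈ w i ∧ AP3.one ∉ w i) ∧
        ∀ i j, AP3.hash ∈ w i → AP3.hash ∈ w j → i = j) ∨
      (∀ i, AP3.two ∉ w i ∧ AP3.hash ∉ w i) := by
  obtain ⟨L1, L2, hU, hc, hd⟩ := h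
  intro w hw
  rw [hU] at hw
  rcases hw with hw | hw
  · left
    rw [sat_G] at hc
    constructor
    · intro i
      obtain ⟨h2, h1, -⟩ := hc i
      exact ⟨by simpa using h2 _ (shift_mem_shift hw i),
             by simpa using h1 _ (shift_mem_shift hw i)⟩
    · have key : ∀ i j, i < j → AP3.hash ∈ w i → AP3.hash ∈ w j → False := by
        intro i j hij hi hj
        obtain ⟨-, -, ho⟩ := hc i
        obtain ⟨P, Q, hPQ, hP, hQ⟩ := ho
        have hmem : w.shift i ∈ P ∪ Q := hPQ ▸ shift_mem_shift hw i
        rcases hmem with hm | hm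
        · exact hP _ hm (by simpa using hi)
        · have hQ' : (Gf nh).sat (Team.shift Q 1) := hQ
          have hu : ((w.shift i).shift 1).shift (j - i - 1)
              ∈ (Team.shift Q 1).shift (j - i - 1) :=
            shift_mem_shift (shift_mem_shift hm 1) (j - i - 1)
          have := (sat_G.mp hQ') (j - i - 1) _ hu
          apply this
          show AP3.hash ∈ w (i + (1 + (j - i - 1 + 0)))
          have e : i + (1 + (j - i - 1 + 0)) = j := by omega
          rw [e]; exact hj
      intro i j hi hj
      rcases lt_trichotomy i j with h | h | h
      · exact absurd (key i j h hi hj) not_false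
      · exact h
      · exact absurd (key j i h hj hi) not_false
  · right
    rw [sat_G] at hd
    intro i
    obtain ⟨h2, hh⟩ := hd i
    exact ⟨by simpa using h2 _ (shift_mem_shift hw i),
           by simpa using hh _ (shift_mem_shift hw i)⟩

/-- The key consequence: every model of Φ contains, for every `A : Set ℕ`,
a trace whose `one`-positions are exactly `A`. -/
lemma key {L : Team AP3} (h : Φ.sat L) (A : Set ℕ) :
    ∃ w ∈ L, ∀ n, AP3.one ∈ w n ↔ n ∈ A := by
  obtain ⟨h1, h2, h3⟩ := h
  have hclass := classify h1
  set T : Team AP3 := {w ∈ L | (∀ i, AP3.two ∈ w i) ∧ ∃ n, AP3.hash ∈ w n ∧ n ∉ A}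
    with hTdef
  have hTsub : T ⊆ L := fun w hw => hw.1
  set R : Team AP3 := L \ T with hRdef
  have hsplit : L = T ∪ R := (Set.union_diff_cancel hTsub).symm
  have hTsat : (Gf a2).sat T := by
    rw [sat_G]
    intro i v hv
    obtain ⟨w, hw, rfl⟩ := mem_shift.mp hv
    simpa using hw.2.1 i
  have h3' : ¬ (TeamFormN.or (Gf a2) (TeamFormN.bneg bet)).sat L := h3
  have hbet : bet.sat R := by
    by_contra hb
    exact h3' ⟨T, R, hsplit, hTsat, hb⟩
  -- clocks for each n ∈ A are in R
  have hclock : ∀ n ∈ A, ∃ c ∈ R, (∀ i, AP3.two ∈ c i) ∧ AP3.hash ∈ c n ∧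
      ∀ m, AP3.hash ∈ c m → m = n := by
    intro n hn
    have h2' : (Gf (Ef (.and a2 ah))).sat L := h2
    have hEn := (sat_G.mp h2') n
    rw [sat_E] at hEn
    obtain ⟨T', hT', ⟨v, hv⟩, h2v, hhv⟩ := hEn
    obtain ⟨c, hc, rfl⟩ := mem_shift.mp (hT' hv)
    have hc2 : AP3.two ∈ c n := by simpa using h2v _ hv
    have hch : AP3.hash ∈ c n := by simpa using hhv _ hv
    rcases hclass c hc with ⟨hcl, honce⟩ | hdat
    · have huniq : ∀ m, AP3.hash ∈ c m → m = n := fun m hm => honce m n hm hch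
      refine ⟨c, ⟨hc, ?_⟩, fun i => (hcl i).1, hch, huniq⟩
      rintro ⟨-, -, m, hm, hmA⟩
      exact hmA (huniq m hm ▸ hn)
    · exact absurd hc2 (hdat n).1
  -- unpack bet
  obtain ⟨M, S, hMS, ⟨hEn2, hmatch⟩, hSn2⟩ := hbet
  have hmatch' : (Gf (.and cond1 (.and cond2 cond3))).sat M := hmatch
  have hSn2' : (Gf n2).sat S := hSn2
  have hMR : M ⊆ R := hMS ▸ Set.subset_union_left
  have hML : M ⊆ L := fun x hx => (hMR hx).1
  -- the data trace
  obtain ⟨T', hT'M, ⟨w0, hw0T⟩, hw0n2⟩ := sat_E.mp hEn2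
  have hw0M : w0 ∈ M := hT'M hw0T
  have hw0d : ∀ i, AP3.two ∉ w0 i ∧ AP3.hash ∉ w0 i := by
    rcases hclass w0 (hML hw0M) with ⟨hcl, -⟩ | hdat
    · exact absurd ((hcl 0).1) (hw0n2 _ hw0T)
    · exact hdat
  refine ⟨w0, hML hw0M, fun n => ⟨?_, ?_⟩⟩
  · -- one ∈ w0 n → n ∈ A
    intro h1n
    obtain ⟨-, -, hc3⟩ := (sat_G.mp hmatch') n
    have hEhyp : (Ef (.and n2 a1)).sat (M.shift n) := by
      rw [sat_E]
      refine ⟨{w0.shift n}, ?_, Set.singleton_nonempty _, ?_, ?_⟩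
      · simpa using shift_mem_shift hw0M n
      · intro v hv; rw [Set.mem_singleton_iff] at hv; subst hv
        simpa using (hw0d n).1
      · intro v hv; rw [Set.mem_singleton_iff] at hv; subst hv
        simpa using h1n
    have hEc := sat_imp.mp hc3 hEhyp
    rw [sat_E] at hEc
    obtain ⟨T'', hT''M, ⟨v, hv⟩, h2v, hhv⟩ := hEc
    obtain ⟨u, hu, rfl⟩ := mem_shift.mp (hT''M hv)
    have hu2 : AP3.two ∈ u n := by simpa using h2v _ hv
    have huh : AP3.hash ∈ u n := by simpa using hhv _ hv
    have huR : u ∈ R := hMR hu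
    rcases hclass u (hML hu) with ⟨hcl, honce⟩ | hdat
    · by_contra hnA
      exact huR.2 ⟨hML hu, fun i => (hcl i).1, n, huh, hnA⟩
    · exact absurd hu2 (hdat n).1
  · -- n ∈ A → one ∈ w0 n
    intro hnA
    obtain ⟨c, hcR, hc2, hch, -⟩ := hclock n hnA
    have hcM : c ∈ M := by
      have hcMS : c ∈ M ∪ S := hMS ▸ hcR
      rcases hcMS with h | h
      · exact h
      · exfalso
        have := (sat_G.mp hSn2') 0 _ (shift_mem_shift h 0)
        simp only [shift_apply, Nat.add_zero] at this
        exact this (hc2 0)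
    obtain ⟨hc1, hc2', -⟩ := (sat_G.mp hmatch') n
    have hEhyp : (Ef (.and a2 ah)).sat (M.shift n) := by
      rw [sat_E]
      refine ⟨{c.shift n}, ?_, Set.singleton_nonempty _, ?_, ?_⟩
      · simpa using shift_mem_shift hcM n
      · intro v hv; rw [Set.mem_singleton_iff] at hv; subst hv
        simpa using hc2 n
      · intro v hv; rw [Set.mem_singleton_iff] at hv; subst hv
        simpa using hch
    have hE1 := sat_imp.mp hc2' hEhyp
    have hor := sat_imp.mp hc1 hE1
    obtain ⟨P, Q, hPQ, hP, hQ⟩ := hor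
    have hmem : w0.shift n ∈ P ∪ Q := hPQ ▸ shift_mem_shift hw0M n
    rcases hmem with hm | hm
    · exfalso
      have := hP _ hm
      simp only [shift_apply, Nat.add_zero] at this
      exact (hw0d n).1 this
    · have := hQ _ hm
      simpa using this

/-- the canonical clock traces -/
def clock (n : ℕ) : Trace AP3 := fun i => {p | p = AP3.two ∨ (p = AP3.hash ∧ i = n)}

/-- the canonical data traces -/
def dataTr (A : Set ℕ) : Trace AP3 := fun i => {p | p = AP3.one ∧ i ∈ A}

def Lstar : Team AP3 := Set.range clock ∪ Set.range dataTr

@[simp] lemma two_mem_clock (n i : ℕ) : AP3.two ∈ clock n i := by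
  simp [clock]

@[simp] lemma one_not_mem_clock (n i : ℕ) : AP3.one ∉ clock n i := by
  simp [clock]

lemma hash_mem_clock {n i : ℕ} : AP3.hash ∈ clock n i ↔ i = n := by
  simp [clock]

@[simp] lemma two_not_mem_data (A : Set ℕ) (i : ℕ) : AP3.two ∉ dataTr A i := by
  simp [dataTr]

@[simp] lemma hash_not_mem_data (A : Set ℕ) (i : ℕ) : AP3.hash ∉ dataTr A i := by
  simp [dataTr]

@[simp] lemma one_mem_data {A : Set ℕ} {i : ℕ} : AP3.one ∈ dataTr A i ↔ i ∈ A := by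
  simp [dataTr]

lemma clock_ne_data (n : ℕ) (A : Set ℕ) : clock n ≠ dataTr A := by
  intro h
  have := two_mem_clock n 0
  rw [h] at this
  exact two_not_mem_data A 0 this

lemma sat_Lstar : Φ.sat Lstar := by
  refine ⟨?_, ?_, ?_⟩
  · -- Φ1
    refine ⟨Set.range clock, Set.range dataTr, rfl, ?_, ?_⟩
    · rw [sat_G]
      intro i
      refine ⟨?_, ?_, ?_⟩
      · rintro v hv
        obtain ⟨w, ⟨m, rfl⟩, rfl⟩ := mem_shift.mp hv
        simp
      · rintro v hv
        obtain ⟨w, ⟨m, rfl⟩, rfl⟩ := mem_shift.mp hv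
        simp
      · -- once
        refine ⟨{v ∈ Team.shift (Set.range clock) i | AP3.hash ∉ v 0},
                {v ∈ Team.shift (Set.range clock) i | AP3.hash ∈ v 0}, ?_, ?_, ?_⟩
        · ext v; by_cases h : AP3.hash ∈ v 0 <;> simp [h] <;> tauto
        · exact fun v hv => hv.2
        · show (Gf nh).sat _
          rw [sat_G]
          intro j u hu
          obtain ⟨u1, hu1, rfl⟩ := mem_shift.mp hu
          obtain ⟨v, hv, rfl⟩ := mem_shift.mp hu1
          obtain ⟨hv', hhv⟩ := hv
          obtain ⟨w, ⟨m, rfl⟩, rfl⟩ := mem_shift.mp hv'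
          intro hcontra
          have e1 : i = m := hash_mem_clock.mp (by simpa using hhv)
          have e2 : i + (1 + (j + 0)) = m := hash_mem_clock.mp (by simpa using hcontra)
          omega
    · rw [sat_G]
      intro i
      refine ⟨?_, ?_⟩ <;> rintro v hv <;>
        obtain ⟨w, ⟨A, rfl⟩, rfl⟩ := mem_shift.mp hv <;> simp
  · -- Φ2
    show (Gf (Ef (.and a2 ah))).sat Lstar
    rw [sat_G]
    intro i
    rw [sat_E]
    refine ⟨{(clock i).shift i}, ?_, Set.singleton_nonempty _, ?_, ?_⟩
    · simpa using shift_mem_shift (Or.inl ⟨i, rfl⟩ : clock i ∈ Lstar) i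
    · intro v hv; rw [Set.mem_singleton_iff] at hv; subst hv; simp
    · intro v hv; rw [Set.mem_singleton_iff] at hv; subst hv
      simpa using hash_mem_clock.mpr rfl
  · -- Φ3
    show ¬ (TeamFormN.or (Gf a2) (TeamFormN.bneg bet)).sat Lstar
    rintro ⟨T, R, hU, hT, hnb⟩
    have hnb' : ¬ bet.sat R := hnb
    apply hnb'
    have hT' : (Gf a2).sat T := hT
    -- every data trace is in R
    have hdataR : ∀ A : Set ℕ, dataTr A ∈ R := by
      intro A
      have hmem : dataTr A ∈ T ∪ R := hU ▸ Or.inr ⟨A, rfl⟩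
      rcases hmem with h | h
      · exfalso
        have := (sat_G.mp hT') 0 _ (shift_mem_shift h 0)
        simp at this
      · exact h
    set A0 : Set ℕ := {n | clock n ∈ R} with hA0
    set M : Team AP3 := (R ∩ Set.range clock) ∪ {dataTr A0} with hM
    set S : Team AP3 := R ∩ Set.range dataTr with hS
    have hRsub : R ⊆ Set.range clock ∪ Set.range dataTr := by
      intro w hw
      have : w ∈ T ∪ R := Or.inr hw
      rw [← hU] at this
      exact this
    have hsplit : R = M ∪ S := by
      apply Set.eq_of_subset_of_subset
      · intro w hw
        rcases hRsub hw with h | h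
        · exact Or.inl (Or.inl ⟨hw, h⟩)
        · exact Or.inr ⟨hw, h⟩
      · intro w hw
        rcases hw with (⟨h, -⟩ | h) | ⟨h, -⟩
        · exact h
        · rw [Set.mem_singleton_iff] at h
          exact h ▸ hdataR A0
        · exact h
    have hdataM : dataTr A0 ∈ M := Or.inr rfl
    refine ⟨M, S, hsplit, ⟨?_, ?_⟩, ?_⟩
    · -- Ef n2
      rw [sat_E]
      refine ⟨{dataTr A0}, ?_, Set.singleton_nonempty _, ?_⟩
      · simpa using hdataM
      · intro v hv; rw [Set.mem_singleton_iff] at hv; subst hv; simp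
    · -- matchf
      show (Gf (.and cond1 (.and cond2 cond3))).sat M
      rw [sat_G]
      intro i
      have hback : (Ef (.and n2 a1)).sat (M.shift i) → i ∈ A0 := by
        intro hE
        rw [sat_E] at hE
        obtain ⟨T', hT'M, ⟨v, hv⟩, h2v, h1v⟩ := hE
        obtain ⟨u, hu, rfl⟩ := mem_shift.mp (hT'M hv)
        have hu2 : AP3.two ∉ u i := by simpa using h2v _ hv
        have hu1 : AP3.one ∈ u i := by simpa using h1v _ hv
        rcases hu with ⟨-, m, rfl⟩ | hu
        · exact absurd (two_mem_clock m i) hu2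
        · rw [Set.mem_singleton_iff] at hu
          subst hu
          exact one_mem_data.mp hu1
      refine ⟨?_, ?_, ?_⟩
      · -- cond1
        show (impf (Ef (.and n2 a1)) (.or a2 a1)).sat (M.shift i)
        rw [sat_imp]
        intro hE
        have hiA := hback hE
        refine ⟨{v ∈ M.shift i | AP3.two ∈ v 0}, {v ∈ M.shift i | AP3.two ∉ v 0},
          ?_, ?_, ?_⟩
        · ext v; by_cases h : AP3.two ∈ v 0 <;> simp [h] <;> tauto
        · exact fun v hv => hv.2
        · rintro v ⟨hv, h2v⟩
          obtain ⟨u, hu, rfl⟩ := mem_shift.mp hv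
          rcases hu with ⟨-, m, rfl⟩ | hu
          · exact absurd (by simpa using two_mem_clock m i) h2v
          · rw [Set.mem_singleton_iff] at hu
            subst hu
            simpa using one_mem_data.mpr hiA
      · -- cond2
        show (impf (Ef (.and a2 ah)) (Ef (.and n2 a1))).sat (M.shift i)
        rw [sat_imp]
        intro hE
        rw [sat_E] at hE
        obtain ⟨T', hT'M, ⟨v, hv⟩, h2v, hhv⟩ := hE
        obtain ⟨u, hu, rfl⟩ := mem_shift.mp (hT'M hv)
        have huh : AP3.hash ∈ u i := by simpa using hhv _ hv
        have hiA : i ∈ A0 := by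
          rcases hu with ⟨huR, m, rfl⟩ | hu
          · have : i = m := hash_mem_clock.mp huh
            subst this
            exact huR
          · rw [Set.mem_singleton_iff] at hu
            subst hu
            exact absurd huh (hash_not_mem_data _ _)
        rw [sat_E]
        refine ⟨{(dataTr A0).shift i}, ?_, Set.singleton_nonempty _, ?_, ?_⟩
        · simpa using shift_mem_shift hdataM i
        · intro v' hv'; rw [Set.mem_singleton_iff] at hv'; subst hv'; simp
        · intro v' hv'; rw [Set.mem_singleton_iff] at hv'; subst hv'
          simpa using one_mem_data.mpr hiA
      · -- cond3
        show (impf (Ef (.and n2 a1)) (Ef (.and a2 ah))).sat (M.shift i)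
        rw [sat_imp]
        intro hE
        have hiA := hback hE
        have hcM : clock i ∈ M := Or.inl ⟨hiA, i, rfl⟩
        rw [sat_E]
        refine ⟨{(clock i).shift i}, ?_, Set.singleton_nonempty _, ?_, ?_⟩
        · simpa using shift_mem_shift hcM i
        · intro v hv; rw [Set.mem_singleton_iff] at hv; subst hv; simp
        · intro v hv; rw [Set.mem_singleton_iff] at hv; subst hv
          simpa using hash_mem_clock.mpr rfl
    · -- S ⊨ G n2
      show (Gf n2).sat S
      rw [sat_G]
      intro i v hv
      obtain ⟨u, ⟨-, A, rfl⟩, rfl⟩ := mem_shift.mp hv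
      simp

lemma uncount {L : Team AP3} (h : Φ.sat L) : ¬ L.Countable := by
  intro hc
  have hkey := key h
  choose f hfL hf using hkey
  have hinj : Function.Injective f := by
    intro A B hAB
    ext n
    rw [← hf A n, hAB, hf B n]
  haveI := hc.to_subtype
  have hco : Countable (Set ℕ) := by
    have hin : Function.Injective (fun A => (⟨f A, hfL A⟩ : L)) := by
      intro A B hAB
      exact hinj (congrArg Subtype.val hAB)
    exact hin.countable
  obtain ⟨g, hg⟩ := exists_injective_nat (Set ℕ)
  exact Function.cantor_injective g hg

end UncAux

/-- there is a satisfiable TeamLTL(~) formula over `AP = {1,2,#}`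
all of whose models are uncountable. -/
theorem teamLTLN_uncountable_models :
    ∃ φ : TeamFormN AP3,
      (∃ L : Team AP3, ¬ L.Countable ∧ φ.sat L) ∧
      (∀ L : Team AP3, φ.sat L → ¬ L.Countable) := by
  exact ⟨UncAux.Φ, ⟨UncAux.Lstar, UncAux.uncount UncAux.sat_Lstar, UncAux.sat_Lstar⟩,
    fun L h => UncAux.uncount h⟩
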